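/- With a = 1/3, b = 2/3 (i.e. k = 0) and F₀(η) = A + Bη + Ce^{-η}, the one-step VIM iterate F₁(η) = F₀(η) - (1/2)∫₀^η(τ-η)²[F₀''' - (1/3)(F₀')² + (2/3)F₀F₀'']dτ is given explicitly by F₁(η) = Bη + A + C - C²/24 - Cη + (η²C)/2 + (2/3)ηe^{-η}CB - (1/12)η²C² - (2/3)CA - (8/3)BC + (1/12)ηC² + (1/18)B²η³ + (1/24)C²e^{-2η} + (8/3)BCe^{-η} + (2/3)CAe^{-η} + (2/3)CAη + 2CBη - (2/3)BCη² - (1/3)CAη². -/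

import Mathlib

theorem stmt_8 (A B C : ℝ) (F₀ F₁ : ℝ → ℝ)
    (hF₀ : ∀ η, F₀ η = A + B * η + C * Real.exp (-η))
    (hF₁ : ∀ η, F₁ η = F₀ η - (1/2) * ∫ τ in (0:ℝ)..η, (τ - η)^2 *
      (deriv (deriv (deriv F₀)) τ - (1/3) * (deriv F₀ τ)^2 + (2/3) * F₀ τ * deriv (deriv F₀) τ)) :
    ∀ η, F₁ η = B * η + A + C - C^2/24 - C * η + η^2 * C / 2
      + (2/3) * η * Real.exp (-η) * C * B - (1/12) * η^2 * C^2 - (2/3) * C * A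
      - (8/3) * B * C + (1/12) * η * C^2 + (1/18) * B^2 * η^3
      + (1/24) * C^2 * Real.exp (-2*η) + (8/3) * B * C * Real.exp (-η)
      + (2/3) * C * A * Real.exp (-η) + (2/3) * C * A * η + 2 * C * B * η
      - (2/3) * B * C * η^2 - (1/3) * C * A * η^2 := by
  have hF : F₀ = fun x => A + B * x + C * Real.exp (-x) := funext hF₀
  have heD : ∀ τ : ℝ, HasDerivAt (fun x : ℝ => Real.exp (-x)) (-Real.exp (-τ)) τ := by
    intro τ
    simpa using (hasDerivAt_neg τ).exp
  have d1 : deriv F₀ = fun x => B - C * Real.exp (-x) := by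
    funext τ
    rw [hF]
    have : HasDerivAt (fun x => A + B * x + C * Real.exp (-x)) (B - C * Real.exp (-τ)) τ := by
      have h := (((hasDerivAt_id τ).const_mul B).const_add A).fun_add ((heD τ).const_mul C)
      exact h.congr_deriv (by ring)
    exact this.deriv
  have d2 : deriv (deriv F₀) = fun x => C * Real.exp (-x) := by
    funext τ
    rw [d1]
    have : HasDerivAt (fun x => B - C * Real.exp (-x)) (C * Real.exp (-τ)) τ := by
      have h := (hasDerivAt_const τ B).fun_sub ((heD τ).const_mul C)
      exact h.congr_deriv (by ring)
    exact this.deriv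
  have d3 : deriv (deriv (deriv F₀)) = fun x => -(C * Real.exp (-x)) := by
    funext τ
    rw [d2]
    have : HasDerivAt (fun x => C * Real.exp (-x)) (-(C * Real.exp (-τ))) τ := by
      have h := (heD τ).const_mul C
      exact h.congr_deriv (by ring)
    exact this.deriv
  intro η
  rw [hF₁, hF₀]
  set c0 : ℝ := C * (2*B/3 + 2*A/3 - 1) with hc0
  set c1 : ℝ := (2/3) * B * C with hc1
  set Φ : ℝ → ℝ := fun τ => (-(1/9)*B^2) * (τ-η)^3
      - Real.exp (-τ) * ((c0 + c1*τ)*((τ-η)^2 + (2*(τ-η) + 2)) + c1*((τ-η)^2 + (4*(τ-η) + 6)))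
      - ((1/3)*C^2) * (Real.exp (-2*τ) * ((τ-η)^2/2 + ((τ-η)/2 + 1/4))) with hΦ
  have key : ∀ τ : ℝ, HasDerivAt Φ ((τ - η)^2 *
      (-(C * Real.exp (-τ)) - 1/3 * (B - C * Real.exp (-τ))^2
        + 2/3 * (A + B*τ + C * Real.exp (-τ)) * (C * Real.exp (-τ)))) τ := by
    intro τ
    have h1 : HasDerivAt (fun τ : ℝ => τ - η) 1 τ := (hasDerivAt_id τ).sub_const η
    have hsq : HasDerivAt (fun τ : ℝ => (τ-η)^2) (2*(τ-η)) τ := by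
      simpa using h1.fun_pow 2
    have hcube : HasDerivAt (fun τ : ℝ => (τ-η)^3) (3*(τ-η)^2) τ := by
      simpa using h1.fun_pow 3
    have he2 : HasDerivAt (fun x : ℝ => Real.exp (-2*x)) (Real.exp (-2*τ) * (-2)) τ := by
      simpa using ((hasDerivAt_id τ).const_mul (-2)).exp
    have hq1 : HasDerivAt (fun τ : ℝ => c0 + c1*τ) c1 τ := by
      simpa using ((hasDerivAt_id τ).const_mul c1).const_add c0
    have hA1 : HasDerivAt (fun τ : ℝ => (τ-η)^2 + (2*(τ-η) + 2)) (2*(τ-η) + 2*1) τ :=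
      hsq.add ((h1.const_mul 2).add_const 2)
    have hA2 : HasDerivAt (fun τ : ℝ => (τ-η)^2 + (4*(τ-η) + 6)) (2*(τ-η) + 4*1) τ :=
      hsq.add ((h1.const_mul 4).add_const 6)
    have hR : HasDerivAt (fun τ : ℝ => (τ-η)^2/2 + ((τ-η)/2 + 1/4)) (2*(τ-η)/2 + 1/2) τ :=
      (hsq.div_const 2).add ((h1.div_const 2).add_const (1/4))
    have H := ((hcube.const_mul (-(1/9)*B^2)).fun_sub
        ((heD τ).fun_mul ((hq1.fun_mul hA1).fun_add (hA2.const_mul c1)))).fun_sub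
        ((he2.fun_mul hR).const_mul ((1/3)*C^2))
    refine H.congr_deriv ?_
    simp only [hc0, hc1]
    have h2e : Real.exp (-2*τ) = Real.exp (-τ) * Real.exp (-τ) := by
      rw [← Real.exp_add]; ring_nf
    rw [h2e]
    ring
  have hint : IntervalIntegrable (fun τ => (τ - η)^2 *
      (-(C * Real.exp (-τ)) - 1/3 * (B - C * Real.exp (-τ))^2
        + 2/3 * (A + B*τ + C * Real.exp (-τ)) * (C * Real.exp (-τ)))) MeasureTheory.volume 0 η := by
    apply Continuous.intervalIntegrable
    fun_prop
  have hI : (∫ τ in (0:ℝ)..η, (τ - η)^2 *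
      (deriv (deriv (deriv F₀)) τ - (1/3) * (deriv F₀ τ)^2 + (2/3) * F₀ τ * deriv (deriv F₀) τ))
      = Φ η - Φ 0 := by
    rw [show (fun τ => (τ - η)^2 *
      (deriv (deriv (deriv F₀)) τ - (1/3) * (deriv F₀ τ)^2 + (2/3) * F₀ τ * deriv (deriv F₀) τ))
      = (fun τ => (τ - η)^2 *
      (-(C * Real.exp (-τ)) - 1/3 * (B - C * Real.exp (-τ))^2
        + 2/3 * (A + B*τ + C * Real.exp (-τ)) * (C * Real.exp (-τ)))) from by
        funext τ; rw [d3, d2, d1]; simp only [hF₀]]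
    exact intervalIntegral.integral_eq_sub_of_hasDerivAt (fun τ _ => key τ) hint
  rw [hI, hΦ]
  have hexp0 : Real.exp (-(0:ℝ)) = 1 := by norm_num
  have hexp0' : Real.exp (-2*(0:ℝ)) = 1 := by norm_num
  simp only [hexp0, hexp0', hc0, hc1]
  have h2e : Real.exp (-2*η) = Real.exp (-η) * Real.exp (-η) := by
    rw [← Real.exp_add]; ring_nf
  rw [h2e]
  ring
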